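/- Let P ⊂ ℝ^n_{≥0} be a bounded convex set and 𝒫 = (⋃_{j∈ℕ} jP) ∩ ℕ^n its polytope semigroup. For a nonzero x ∈ ℕ^n lying on a ray τ through the origin, suppose τ ∩ P equals the segment from A to B with 0 < ‖A‖ ≤ ‖B‖ (A, B ∈ ℝ^n, both on τ). Then x ∈ 𝒫 if and only if there exists k ∈ ℕ with ‖x‖/‖B‖ ≤ k ≤ ‖x‖/‖A‖. -/

import Mathlib

open Pointwise

/-- The `j`-th dilate of a set, with the convention `0 • P = {0}`. -/
def dil {V : Type*} [AddCommMonoid V] [Module ℝ V] (j : ℕ) (P : Set V) : Set V :=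
  if j = 0 then {0} else ((j : ℝ) • P : Set V)

/-- Membership criterion for the polytope semigroup: if the ray through a nonzero
integer point `x` meets `P` in the segment from `A` to `B` with `0 < ‖A‖ ≤ ‖B‖`,
then `x ∈ 𝒫` iff some natural `k` satisfies `‖x‖/‖B‖ ≤ k ≤ ‖x‖/‖A‖`. -/
theorem stmt2 {n : ℕ} (P : Set (EuclideanSpace ℝ (Fin n)))
    (hP : P ⊆ {x | ∀ i, 0 ≤ x i}) (hconv : Convex ℝ P)
    (hbd : Bornology.IsBounded P)
    (x : Fin n → ℕ) (xe : EuclideanSpace ℝ (Fin n)) (hxe : ∀ i, xe i = (x i : ℝ))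
    (hx : xe ≠ 0)
    (A B : EuclideanSpace ℝ (Fin n)) (hA : 0 < ‖A‖) (hAB : ‖A‖ ≤ ‖B‖)
    (hAτ : ∃ t : ℝ, 0 ≤ t ∧ A = t • xe) (hBτ : ∃ t : ℝ, 0 ≤ t ∧ B = t • xe)
    (hseg : {y : EuclideanSpace ℝ (Fin n) | ∃ t : ℝ, 0 ≤ t ∧ y = t • xe} ∩ P
      = segment ℝ A B) :
    xe ∈ (⋃ j : ℕ, dil j P) ↔
      ∃ k : ℕ, ‖xe‖ / ‖B‖ ≤ (k : ℝ) ∧ (k : ℝ) ≤ ‖xe‖ / ‖A‖ := by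
  obtain ⟨a, ha0, rfl⟩ := hAτ
  obtain ⟨b, hb0, rfl⟩ := hBτ
  have hxn : (0:ℝ) < ‖xe‖ := norm_pos_iff.mpr hx
  have hna : ‖a • xe‖ = a * ‖xe‖ := by
    rw [norm_smul, Real.norm_eq_abs, abs_of_nonneg ha0]
  have hnb : ‖b • xe‖ = b * ‖xe‖ := by
    rw [norm_smul, Real.norm_eq_abs, abs_of_nonneg hb0]
  rw [hna] at hA hAB
  rw [hnb] at hAB
  have ha : 0 < a := by nlinarith
  have hab : a ≤ b := le_of_mul_le_mul_right hAB hxn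
  have hb : 0 < b := lt_of_lt_of_le ha hab
  have hinj : Function.Injective (fun c : ℝ => c • xe) := smul_left_injective ℝ hx
  have key : ∀ t : ℝ, 0 ≤ t → (t • xe ∈ P ↔ a ≤ t ∧ t ≤ b) := by
    intro t ht
    constructor
    · intro htP
      have hmem : t • xe ∈ segment ℝ (a • xe) (b • xe) := by
        rw [← hseg]; exact ⟨⟨t, ht, rfl⟩, htP⟩
      obtain ⟨u, v, hu, hv, huv, heq⟩ := hmem
      have heq' : (u * a + v * b) • xe = t • xe := by
        rw [add_smul, mul_smul, mul_smul]; exact heq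
      have ht' : u * a + v * b = t := hinj heq'
      constructor <;> nlinarith
    · rintro ⟨h1, h2⟩
      have hmem : t • xe ∈ segment ℝ (a • xe) (b • xe) := by
        rcases eq_or_lt_of_le hab with heq | hlt
        · have : t = a := le_antisymm (heq ▸ h2) h1
          subst this
          exact left_mem_segment ℝ _ _
        · have hba : 0 < b - a := by linarith
          refine ⟨(b - t)/(b - a), (t - a)/(b - a),
            div_nonneg (by linarith) hba.le, div_nonneg (by linarith) hba.le,
            by field_simp; ring, ?_⟩
          rw [smul_smul, smul_smul, ← add_smul]
          congr 1
          field_simp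
          ring
      rw [← hseg] at hmem
      exact hmem.2
  constructor
  · intro hmem
    obtain ⟨j, hj⟩ := Set.mem_iUnion.mp hmem
    unfold dil at hj
    rcases eq_or_ne j 0 with rfl | hj0
    · simp at hj; exact absurd hj hx
    · rw [if_neg hj0] at hj
      have hjpos : (0:ℝ) < (j:ℝ) := by exact_mod_cast Nat.pos_of_ne_zero hj0
      rw [Set.mem_smul_set_iff_inv_smul_mem₀ hjpos.ne'] at hj
      obtain ⟨hlow, hhigh⟩ := (key _ (by positivity)).mp hj
      refine ⟨j, ?_, ?_⟩
      · rw [hnb, div_le_iff₀ (mul_pos hb hxn)]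
        have h1 : 1 ≤ (j:ℝ) * b := by
          rw [← mul_inv_cancel₀ hjpos.ne']
          exact mul_le_mul_of_nonneg_left hhigh hjpos.le
        nlinarith
      · rw [hna, le_div_iff₀ (mul_pos ha hxn)]
        have h1 : (j:ℝ) * a ≤ 1 := by
          rw [← mul_inv_cancel₀ hjpos.ne']
          exact mul_le_mul_of_nonneg_left hlow hjpos.le
        nlinarith
  · rintro ⟨k, hk1, hk2⟩
    rw [hnb] at hk1
    rw [hna] at hk2
    have hk0 : 0 < (k:ℝ) := by
      have : 0 < ‖xe‖ / (b * ‖xe‖) := by positivity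
      linarith
    have hkn : k ≠ 0 := by exact_mod_cast hk0.ne'
    rw [div_le_iff₀ (mul_pos hb hxn)] at hk1
    rw [le_div_iff₀ (mul_pos ha hxn)] at hk2
    have hlow : a ≤ (k:ℝ)⁻¹ := by
      rw [inv_eq_one_div, le_div_iff₀ hk0]
      nlinarith
    have hhigh : (k:ℝ)⁻¹ ≤ b := by
      rw [inv_eq_one_div, div_le_iff₀ hk0]
      nlinarith
    have hPmem : ((k:ℝ)⁻¹) • xe ∈ P := (key _ (by positivity)).mpr ⟨hlow, hhigh⟩
    refine Set.mem_iUnion.mpr ⟨k, ?_⟩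
    unfold dil
    rw [if_neg hkn, Set.mem_smul_set_iff_inv_smul_mem₀ hk0.ne']
    exact hPmem
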